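/- If f is (C, α, δ)-multicalibrated and ({X}, α)-multiaccurate, then for every S ∈ C, every level-set vector (j_1,...,j_L) ∈ {0,...,1/δ−1}^L, and every position k: |E_{x⃗∼D^n, i∼Unif[n]}[1_{x_i∈S}·1_{∀ℓ: f(x_i)_ℓ ∈ [j_ℓδ,(j_ℓ+1)δ)}·(Pr_{r_UA(f*(x⃗))}[i at rank k] − Pr_{r_UA(f(x⃗))}[i at rank k])]| ≤ L·n·α. -/

import Mathlib

open Finset

/-- An `n × L` matrix is row-stochastic (a prediction matrix) if every row is a
probability distribution over the `L` labels. Labels are ordered: a higher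
index in `Fin L` is a better label. -/
def rowStochastic {n L : ℕ} (P : Fin n → Fin L → ℝ) : Prop :=
  (∀ i ℓ, 0 ≤ P i ℓ) ∧ ∀ i, ∑ ℓ, P i ℓ = 1

/-- `N^{>ℓ}`: the number of individuals whose label is strictly better than `ℓ`
under the label assignment `lam`. -/
def nGT {n L : ℕ} (lam : Fin n → Fin L) (ℓ : Fin L) : ℕ :=
  (Finset.univ.filter fun j => ℓ < lam j).card

/-- `N^{=ℓ}`: the number of individuals whose label equals `ℓ`. -/
def nEQ {n L : ℕ} (lam : Fin n → Fin L) (ℓ : Fin L) : ℕ :=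
  (Finset.univ.filter fun j => lam j = ℓ).card

/-- `N^{>ℓ}_{−i}`: the number of individuals other than `i` whose label is
strictly better than `ℓ`. -/
def nGTm {n L : ℕ} (lam : Fin n → Fin L) (i : Fin n) (ℓ : Fin L) : ℕ :=
  ((Finset.univ.erase i).filter fun j => ℓ < lam j).card

/-- `N^{=ℓ}_{−i}`: the number of individuals other than `i` whose label equals
`ℓ`. -/
def nEQm {n L : ℕ} (lam : Fin n → Fin L) (i : Fin n) (ℓ : Fin L) : ℕ :=
  ((Finset.univ.erase i).filter fun j => lam j = ℓ).card

/-- Conditioned on the full label assignment `lam`, the probability that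
individual `i` receives (0-indexed) rank `k` when individuals are sorted by
decreasing label with uniform tie-breaking: it is `1 / N^{=λᵢ}` if
`N^{>λᵢ} ≤ k < N^{>λᵢ} + N^{=λᵢ}` and `0` otherwise. -/
noncomputable def condRank {n L : ℕ} (lam : Fin n → Fin L) (i k : Fin n) : ℝ :=
  if nGT lam (lam i) ≤ k.val ∧ k.val < nGT lam (lam i) + nEQ lam (lam i)
  then ((nEQ lam (lam i) : ℝ))⁻¹ else 0

/-- The uncertainty aware (UA) ranking function: `rUA P i k` is the probability
that individual `i` receives rank `k` when labels `λ_j ∼ P j` are drawn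
independently and individuals are ranked by decreasing label with uniform
tie-breaking. -/
noncomputable def rUA {n L : ℕ} (P : Fin n → Fin L → ℝ) : Fin n → Fin n → ℝ :=
  fun i k => ∑ lam : Fin n → Fin L, (∏ j, P j (lam j)) * condRank lam i k

/-- The probability, under the UA ranking for prediction matrix `P`, that
individual `i` receives rank `k`, conditioned on `λ_i = ℓ` (the labels of the
other individuals being drawn independently from the rows of `P`). -/
noncomputable def condProbGiven {n L : ℕ} (P : Fin n → Fin L → ℝ)
    (i k : Fin n) (ℓ : Fin L) : ℝ :=
  ∑ lam : Fin n → Fin L,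
    if lam i = ℓ then (∏ j ∈ Finset.univ.erase i, P j (lam j)) * condRank lam i k
    else 0

open scoped Classical

lemma condRank_nonneg {n L : ℕ} (lam : Fin n → Fin L) (i k : Fin n) : 0 ≤ condRank lam i k := by
  unfold condRank; split
  · positivity
  · exact le_refl _

lemma condRank_le_one {n L : ℕ} (lam : Fin n → Fin L) (i k : Fin n) : condRank lam i k ≤ 1 := by
  unfold condRank; split
  · have h1 : 0 < nEQ lam (lam i) := Finset.card_pos.mpr ⟨i, by simp [nEQ]⟩
    have : (1:ℝ) ≤ (nEQ lam (lam i) : ℝ) := by exact_mod_cast h1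
    exact inv_le_one_of_one_le₀ this
  · norm_num

/-- hybrid matrix -/
def hyb {n L : ℕ} (F G : Fin n → Fin L → ℝ) (t : ℕ) : Fin n → Fin L → ℝ :=
  fun j => if (j : ℕ) < t then F j else G j

lemma rUA_sub_onerow {n L : ℕ} (P Q : Fin n → Fin L → ℝ) (t : Fin n)
    (h : ∀ j, j ≠ t → P j = Q j) (i k : Fin n) :
    rUA P i k - rUA Q i k
      = ∑ lam : Fin n → Fin L,
          ((∏ j ∈ Finset.univ.erase t, P j (lam j)) * (P t (lam t) - Q t (lam t)))
            * condRank lam i k := by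
  unfold rUA
  rw [← Finset.sum_sub_distrib]
  refine Finset.sum_congr rfl fun lam _ => ?_
  rw [← sub_mul]
  congr 1
  rw [← Finset.mul_prod_erase Finset.univ (fun j => P j (lam j)) (Finset.mem_univ t),
      ← Finset.mul_prod_erase Finset.univ (fun j => Q j (lam j)) (Finset.mem_univ t)]
  have hprod : ∏ j ∈ Finset.univ.erase t, Q j (lam j) = ∏ j ∈ Finset.univ.erase t, P j (lam j) :=
    Finset.prod_congr rfl fun j hj => by rw [h j (Finset.ne_of_mem_erase hj)]
  rw [hprod]; ring

lemma rUA_sub_eq {n L : ℕ} (F G : Fin n → Fin L → ℝ) (i k : Fin n) :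
    rUA F i k - rUA G i k
      = ∑ t : Fin n, ∑ lam : Fin n → Fin L,
          ((∏ j ∈ Finset.univ.erase t, hyb F G ((t:ℕ)+1) j (lam j))
              * (F t (lam t) - G t (lam t))) * condRank lam i k := by
  have htop : hyb F G n = F := by
    funext j; simp [hyb, j.isLt]
  have hbot : hyb F G 0 = G := by
    funext j; simp [hyb]
  have tele : rUA F i k - rUA G i k
      = ∑ t ∈ Finset.range n, (rUA (hyb F G (t+1)) i k - rUA (hyb F G t) i k) := by
    rw [Finset.sum_range_sub (fun t => rUA (hyb F G t) i k), htop, hbot]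
  rw [tele, Finset.sum_range fun t => rUA (hyb F G (t+1)) i k - rUA (hyb F G t) i k]
  refine Finset.sum_congr rfl fun t _ => ?_
  have hne : ∀ j, j ≠ t → hyb F G ((t:ℕ)+1) j = hyb F G t j := by
    intro j hj
    have hv : (j:ℕ) ≠ (t:ℕ) := fun hh => hj (Fin.ext hh)
    have : ((j:ℕ) < (t:ℕ)+1) ↔ ((j:ℕ) < (t:ℕ)) := by omega
    simp [hyb, this]
  rw [rUA_sub_onerow _ _ t hne i k]
  refine Finset.sum_congr rfl fun lam _ => ?_
  have h1 : hyb F G ((t:ℕ)+1) t (lam t) = F t (lam t) := by simp [hyb]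
  have h2 : hyb F G (t:ℕ) t (lam t) = G t (lam t) := by simp [hyb]
  rw [h1, h2]
lemma Tbound {n L : ℕ} (B : Fin n → Fin L → ℝ) (t i k : Fin n) (β : ℝ) (hβ : 0 ≤ β)
    (ht : ∀ ℓ, |B t ℓ| ≤ β)
    (hother : ∀ j, j ≠ t → (∀ ℓ, 0 ≤ B j ℓ) ∧ ∑ ℓ, B j ℓ ≤ 1) :
    |∑ lam : Fin n → Fin L, (∏ j, B j (lam j)) * condRank lam i k| ≤ (L:ℝ) * β := by
  classical
  have h1 : |∑ lam : Fin n → Fin L, (∏ j, B j (lam j)) * condRank lam i k|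
      ≤ ∑ lam : Fin n → Fin L, ∏ j, |B j (lam j)| := by
    refine (Finset.abs_sum_le_sum_abs _ _).trans (Finset.sum_le_sum fun lam _ => ?_)
    rw [abs_mul, abs_of_nonneg (condRank_nonneg lam i k), Finset.abs_prod]
    calc (∏ j, |B j (lam j)|) * condRank lam i k
        ≤ (∏ j, |B j (lam j)|) * 1 :=
          mul_le_mul_of_nonneg_left (condRank_le_one lam i k)
            (Finset.prod_nonneg fun _ _ => abs_nonneg _)
      _ = ∏ j, |B j (lam j)| := mul_one _
  have h2 : ∑ lam : Fin n → Fin L, ∏ j, |B j (lam j)| = ∏ j, ∑ ℓ, |B j ℓ| :=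
    (Fintype.prod_sum fun j ℓ => |B j ℓ|).symm
  have hBt : ∑ ℓ, |B t ℓ| ≤ (L:ℝ) * β := by
    calc ∑ ℓ, |B t ℓ| ≤ ∑ _ℓ : Fin L, β := Finset.sum_le_sum fun ℓ _ => ht ℓ
      _ = (L:ℝ) * β := by
        rw [Finset.sum_const, Finset.card_univ, Fintype.card_fin, nsmul_eq_mul]
  have hBj : ∀ j ∈ Finset.univ.erase t, ∑ ℓ, |B j ℓ| ≤ 1 := by
    intro j hj
    obtain ⟨hnn, hsum⟩ := hother j (Finset.ne_of_mem_erase hj)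
    calc ∑ ℓ, |B j ℓ| = ∑ ℓ, B j ℓ :=
          Finset.sum_congr rfl fun ℓ _ => abs_of_nonneg (hnn ℓ)
      _ ≤ 1 := hsum
  refine h1.trans ?_
  rw [h2, ← Finset.mul_prod_erase Finset.univ _ (Finset.mem_univ t)]
  calc (∑ ℓ, |B t ℓ|) * ∏ j ∈ Finset.univ.erase t, (∑ ℓ, |B j ℓ|)
      ≤ ((L:ℝ) * β) * 1 := by
        refine mul_le_mul hBt
          (Finset.prod_le_one (fun j _ => Finset.sum_nonneg fun _ _ => abs_nonneg _) hBj)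
          (Finset.prod_nonneg fun j _ => Finset.sum_nonneg fun _ _ => abs_nonneg _)
          (by positivity)
    _ = (L:ℝ) * β := mul_one _

lemma main_bound {X : Type*} [Fintype X] (n L : ℕ) (hn : 1 ≤ n)
    (D : X → ℝ) (hD0 : ∀ x, 0 ≤ D x) (hD1 : ∑ x, D x = 1)
    (fstar f : X → Fin L → ℝ)
    (hfstar : ∀ x : X, (∀ ℓ, 0 ≤ fstar x ℓ) ∧ ∑ ℓ, fstar x ℓ = 1)
    (hf : ∀ x : X, (∀ ℓ, 0 ≤ f x ℓ) ∧ ∑ ℓ, f x ℓ = 1)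
    (c : X → Prop) [∀ x, Decidable (c x)] (α : ℝ) (hα : 0 ≤ α)
    (hMCc : ∀ ℓ : Fin L, |∑ x, D x * (if c x then fstar x ℓ - f x ℓ else 0)| ≤ α)
    (hMA : ∀ ℓ : Fin L, |∑ x, D x * (fstar x ℓ - f x ℓ)| ≤ α) (k : Fin n) :
    |∑ xs : Fin n → X, (∏ j, D (xs j)) *
        ((1 / (n : ℝ)) * ∑ i, (if c (xs i) then
            rUA (fun j => fstar (xs j)) i k - rUA (fun j => f (xs j)) i k else 0))|
      ≤ L * n * α := by
  classical
  have hn' : 0 < n := hn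
  have hn0 : (0:ℝ) < (n:ℝ) := by exact_mod_cast hn'
  set Ind : X → ℝ := fun x => if c x then 1 else 0 with hInd
  set B : Fin n → Fin n → Fin n → Fin L → ℝ := fun t i j ℓ =>
    ∑ x, D x * (if j = i then Ind x else 1) *
      (if j = t then fstar x ℓ - f x ℓ
       else if (j:ℕ) < (t:ℕ)+1 then fstar x ℓ else f x ℓ) with hB
  set gg : Fin n → Fin n → (Fin n → Fin L) → Fin n → X → ℝ := fun t i lam j x =>
    D x * (if j = i then Ind x else 1) *
      (if j = t then fstar x (lam j) - f x (lam j)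
       else if (j:ℕ) < (t:ℕ)+1 then fstar x (lam j) else f x (lam j)) with hgg
  have hfact : ∀ (t i : Fin n) (lam : Fin n → Fin L) (xs : Fin n → X),
      (∏ j, gg t i lam j (xs j))
        = (∏ j, D (xs j)) * (Ind (xs i) *
            (((∏ j ∈ Finset.univ.erase t,
                hyb (fun j => fstar (xs j)) (fun j => f (xs j)) ((t:ℕ)+1) j (lam j)) *
              (fstar (xs t) (lam t) - f (xs t) (lam t))))) := by
    intro t i lam xs
    simp only [hgg]
    rw [Finset.prod_mul_distrib, Finset.prod_mul_distrib]
    have e1 : (∏ j, if j = i then Ind (xs j) else 1) = Ind (xs i) := by simp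
    have e2 : (∏ j, (if j = t then fstar (xs j) (lam j) - f (xs j) (lam j)
        else if (j:ℕ) < (t:ℕ)+1 then fstar (xs j) (lam j) else f (xs j) (lam j)))
        = (fstar (xs t) (lam t) - f (xs t) (lam t)) *
          ∏ j ∈ Finset.univ.erase t,
            hyb (fun j => fstar (xs j)) (fun j => f (xs j)) ((t:ℕ)+1) j (lam j) := by
      rw [← Finset.mul_prod_erase Finset.univ _ (Finset.mem_univ t)]
      congr 1
      · simp
      · refine Finset.prod_congr rfl fun j hj => ?_
        rw [if_neg (Finset.ne_of_mem_erase hj)]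
        by_cases hlt : (j:ℕ) < (t:ℕ)+1 <;> simp [hyb, hlt]
    rw [e1, e2]
    ring
  have key2 : (∑ xs : Fin n → X, (∏ j, D (xs j)) *
        ∑ i, (if c (xs i) then
            rUA (fun j => fstar (xs j)) i k - rUA (fun j => f (xs j)) i k else 0))
      = ∑ t : Fin n, ∑ i : Fin n, ∑ lam : Fin n → Fin L,
          (∏ j, B t i j (lam j)) * condRank lam i k := by
    have step1 : ∀ xs : Fin n → X,
        (∏ j, D (xs j)) * ∑ i, (if c (xs i) then
            rUA (fun j => fstar (xs j)) i k - rUA (fun j => f (xs j)) i k else 0)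
        = ∑ t : Fin n, ∑ i : Fin n, ∑ lam : Fin n → Fin L,
            (∏ j, gg t i lam j (xs j)) * condRank lam i k := by
      intro xs
      have e1 : ∀ i : Fin n, (if c (xs i) then
            rUA (fun j => fstar (xs j)) i k - rUA (fun j => f (xs j)) i k else 0)
          = Ind (xs i) * (rUA (fun j => fstar (xs j)) i k - rUA (fun j => f (xs j)) i k) := by
        intro i
        by_cases h : c (xs i) <;> simp [hInd, h]
      have e2 : ∀ i : Fin n,
          Ind (xs i) * (rUA (fun j => fstar (xs j)) i k - rUA (fun j => f (xs j)) i k)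
          = ∑ t : Fin n, ∑ lam : Fin n → Fin L, Ind (xs i) *
              (((∏ j ∈ Finset.univ.erase t,
                  hyb (fun j => fstar (xs j)) (fun j => f (xs j)) ((t:ℕ)+1) j (lam j)) *
                (fstar (xs t) (lam t) - f (xs t) (lam t))) * condRank lam i k) := by
        intro i
        rw [rUA_sub_eq]
        simp only [Finset.mul_sum, mul_assoc]
      calc (∏ j, D (xs j)) * ∑ i, (if c (xs i) then
            rUA (fun j => fstar (xs j)) i k - rUA (fun j => f (xs j)) i k else 0)
          = ∑ i : Fin n, ∑ t : Fin n, ∑ lam : Fin n → Fin L,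
              (∏ j, gg t i lam j (xs j)) * condRank lam i k := by
            rw [Finset.mul_sum]
            refine Finset.sum_congr rfl fun i _ => ?_
            rw [e1 i, e2 i, Finset.mul_sum]
            refine Finset.sum_congr rfl fun t _ => ?_
            rw [Finset.mul_sum]
            refine Finset.sum_congr rfl fun lam _ => ?_
            rw [hfact t i lam xs]
            ring
        _ = ∑ t : Fin n, ∑ i : Fin n, ∑ lam : Fin n → Fin L,
              (∏ j, gg t i lam j (xs j)) * condRank lam i k := Finset.sum_comm
    calc (∑ xs : Fin n → X, (∏ j, D (xs j)) *
          ∑ i, (if c (xs i) then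
              rUA (fun j => fstar (xs j)) i k - rUA (fun j => f (xs j)) i k else 0))
        = ∑ xs : Fin n → X, ∑ t : Fin n, ∑ i : Fin n, ∑ lam : Fin n → Fin L,
            (∏ j, gg t i lam j (xs j)) * condRank lam i k :=
          Finset.sum_congr rfl fun xs _ => step1 xs
      _ = ∑ t : Fin n, ∑ xs : Fin n → X, ∑ i : Fin n, ∑ lam : Fin n → Fin L,
            (∏ j, gg t i lam j (xs j)) * condRank lam i k := Finset.sum_comm
      _ = ∑ t : Fin n, ∑ i : Fin n, ∑ xs : Fin n → X, ∑ lam : Fin n → Fin L,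
            (∏ j, gg t i lam j (xs j)) * condRank lam i k :=
          Finset.sum_congr rfl fun t _ => Finset.sum_comm
      _ = ∑ t : Fin n, ∑ i : Fin n, ∑ lam : Fin n → Fin L, ∑ xs : Fin n → X,
            (∏ j, gg t i lam j (xs j)) * condRank lam i k :=
          Finset.sum_congr rfl fun t _ => Finset.sum_congr rfl fun i _ => Finset.sum_comm
      _ = ∑ t : Fin n, ∑ i : Fin n, ∑ lam : Fin n → Fin L,
            (∏ j, B t i j (lam j)) * condRank lam i k := by
          refine Finset.sum_congr rfl fun t _ => Finset.sum_congr rfl fun i _ =>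
            Finset.sum_congr rfl fun lam _ => ?_
          rw [← Finset.sum_mul]
          congr 1
          rw [← Fintype.prod_sum fun j x => gg t i lam j x]
  have hTb : ∀ t i : Fin n,
      |∑ lam : Fin n → Fin L, (∏ j, B t i j (lam j)) * condRank lam i k| ≤ (L:ℝ) * α := by
    intro t i
    refine Tbound (B t i) t i k α hα ?_ ?_
    · intro ℓ
      by_cases hit : t = i
      · have hrw : B t i t ℓ = ∑ x, D x * (if c x then fstar x ℓ - f x ℓ else 0) := by
          simp only [hB]
          refine Finset.sum_congr rfl fun x _ => ?_
          by_cases hc : c x <;> simp [hit, hInd, hc]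
        rw [hrw]; exact hMCc ℓ
      · have hrw : B t i t ℓ = ∑ x, D x * (fstar x ℓ - f x ℓ) := by
          simp only [hB]
          refine Finset.sum_congr rfl fun x _ => ?_
          simp [hit]
        rw [hrw]; exact hMA ℓ
    · intro j hj
      constructor
      · intro ℓ
        simp only [hB]
        refine Finset.sum_nonneg fun x _ => ?_
        refine mul_nonneg (mul_nonneg (hD0 x) ?_) ?_
        · split
          · simp only [hInd]; split <;> norm_num
          · norm_num
        · rw [if_neg hj]
          split
          · exact (hfstar x).1 ℓ
          · exact (hf x).1 ℓ
      · have hone : ∀ x : X, (∑ ℓ, (if j = t then fstar x ℓ - f x ℓ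
            else if (j:ℕ) < (t:ℕ)+1 then fstar x ℓ else f x ℓ)) = 1 := by
          intro x
          simp only [if_neg hj]
          by_cases hlt : (j:ℕ) < (t:ℕ)+1
          · simp only [if_pos hlt]; exact (hfstar x).2
          · simp only [if_neg hlt]; exact (hf x).2
        have hcompute : ∑ ℓ, B t i j ℓ = ∑ x, D x * (if j = i then Ind x else 1) := by
          simp only [hB]
          rw [Finset.sum_comm]
          refine Finset.sum_congr rfl fun x _ => ?_
          rw [← Finset.mul_sum, hone x, mul_one]
        rw [hcompute]
        calc ∑ x, D x * (if j = i then Ind x else 1) ≤ ∑ x, D x * 1 := by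
              refine Finset.sum_le_sum fun x _ => ?_
              refine mul_le_mul_of_nonneg_left ?_ (hD0 x)
              split
              · simp only [hInd]; split <;> norm_num
              · exact le_refl 1
          _ = 1 := by simpa using hD1
  have habs2 : |∑ xs : Fin n → X, (∏ j, D (xs j)) *
        (∑ i, (if c (xs i) then
            rUA (fun j => fstar (xs j)) i k - rUA (fun j => f (xs j)) i k else 0))|
      ≤ (n:ℝ) * ((n:ℝ) * ((L:ℝ) * α)) := by
    rw [key2]
    refine (Finset.abs_sum_le_sum_abs _ _).trans ?_
    calc ∑ t : Fin n, |∑ i : Fin n, ∑ lam : Fin n → Fin L,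
            (∏ j, B t i j (lam j)) * condRank lam i k|
        ≤ ∑ t : Fin n, ∑ i : Fin n, |∑ lam : Fin n → Fin L,
            (∏ j, B t i j (lam j)) * condRank lam i k| :=
          Finset.sum_le_sum fun t _ => Finset.abs_sum_le_sum_abs _ _
      _ ≤ ∑ _t : Fin n, ∑ _i : Fin n, (L:ℝ) * α :=
          Finset.sum_le_sum fun t _ => Finset.sum_le_sum fun i _ => hTb t i
      _ = (n:ℝ) * ((n:ℝ) * ((L:ℝ) * α)) := by
          simp [Finset.sum_const, Finset.card_univ, nsmul_eq_mul]
  have hrw : (∑ xs : Fin n → X, (∏ j, D (xs j)) *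
        ((1 / (n : ℝ)) * ∑ i, (if c (xs i) then
            rUA (fun j => fstar (xs j)) i k - rUA (fun j => f (xs j)) i k else 0)))
      = (1/(n:ℝ)) * ∑ xs : Fin n → X, (∏ j, D (xs j)) *
          (∑ i, (if c (xs i) then
            rUA (fun j => fstar (xs j)) i k - rUA (fun j => f (xs j)) i k else 0)) := by
    rw [Finset.mul_sum]
    exact Finset.sum_congr rfl fun xs _ => by ring
  rw [hrw, abs_mul, abs_of_nonneg (by positivity : (0:ℝ) ≤ 1/(n:ℝ))]
  have hne : (n:ℝ) ≠ 0 := ne_of_gt hn0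
  calc (1/(n:ℝ)) * |∑ xs : Fin n → X, (∏ j, D (xs j)) *
          (∑ i, (if c (xs i) then
            rUA (fun j => fstar (xs j)) i k - rUA (fun j => f (xs j)) i k else 0))|
      ≤ (1/(n:ℝ)) * ((n:ℝ) * ((n:ℝ) * ((L:ℝ) * α))) :=
        mul_le_mul_of_nonneg_left habs2 (by positivity)
    _ = (L:ℝ) * (n:ℝ) * α := by field_simp


/-- If `f` is `(𝒞, α, δ)`-multicalibrated (with `δ = 1/m`)
and `({X}, α)`-multiaccurate with respect to the ground truth `fstar`, then
for every group `S ∈ 𝒞`, every level-set vector `jvec ∈ {0, …, m−1}^L`, and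
every position `k`, the expected difference between the UA rank-`k`
probabilities under the ground truth and under `f`, restricted to sampled
individuals in `S` whose predictions fall in the `jvec` bins, is at most
`L · n · α`. -/
theorem rUA_multicalibration_composition
    {X : Type*} [Fintype X] (n L : ℕ) (hn : 1 ≤ n)
    (D : X → ℝ) (hD0 : ∀ x, 0 ≤ D x) (hD1 : ∑ x, D x = 1)
    (fstar f : X → Fin L → ℝ)
    (hfstar : ∀ x : X, (∀ ℓ, 0 ≤ fstar x ℓ) ∧ ∑ ℓ, fstar x ℓ = 1)
    (hf : ∀ x : X, (∀ ℓ, 0 ≤ f x ℓ) ∧ ∑ ℓ, f x ℓ = 1)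
    (𝒞 : Set (Set X)) (α : ℝ) (m : ℕ) (hm : 1 ≤ m)
    (hMC : ∀ S ∈ 𝒞, ∀ jvec : Fin L → Fin m, ∀ ℓ : Fin L,
      |∑ x, D x *
          (if x ∈ S ∧ (∀ ℓ' : Fin L,
                ((jvec ℓ' : ℕ) : ℝ) * (1 / (m : ℝ)) ≤ f x ℓ' ∧
                  f x ℓ' < (((jvec ℓ' : ℕ) : ℝ) + 1) * (1 / (m : ℝ)))
            then fstar x ℓ - f x ℓ else 0)| ≤ α)
    (hMA : ∀ ℓ : Fin L, |∑ x, D x * (fstar x ℓ - f x ℓ)| ≤ α) :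
    ∀ S ∈ 𝒞, ∀ jvec : Fin L → Fin m, ∀ k : Fin n,
      |∑ xs : Fin n → X, (∏ j, D (xs j)) *
          ((1 / (n : ℝ)) * ∑ i,
            (if xs i ∈ S ∧ (∀ ℓ' : Fin L,
                  ((jvec ℓ' : ℕ) : ℝ) * (1 / (m : ℝ)) ≤ f (xs i) ℓ' ∧
                    f (xs i) ℓ' < (((jvec ℓ' : ℕ) : ℝ) + 1) * (1 / (m : ℝ)))
              then
                rUA (fun j => fstar (xs j)) i k - rUA (fun j => f (xs j)) i k
              else 0))|
        ≤ L * n * α := by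
  intro S hS jvec k
  classical
  rcases Nat.eq_zero_or_pos L with hL | hL
  · subst hL
    have hE : IsEmpty (Fin n → Fin 0) := ⟨fun g => (g ⟨0, hn⟩).elim0⟩
    have h0 : ∀ (P : Fin n → Fin 0 → ℝ) (i : Fin n), rUA P i k = 0 := by
      intro P i
      unfold rUA
      rw [Finset.univ_eq_empty, Finset.sum_empty]
    simp [h0]
  · have hα : 0 ≤ α := le_trans (abs_nonneg _) (hMA ⟨0, hL⟩)
    exact main_bound n L hn D hD0 hD1 fstar f hfstar hf
      (fun x => x ∈ S ∧ (∀ ℓ' : Fin L,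
        ((jvec ℓ' : ℕ) : ℝ) * (1 / (m : ℝ)) ≤ f x ℓ' ∧
          f x ℓ' < (((jvec ℓ' : ℕ) : ℝ) + 1) * (1 / (m : ℝ)))) α hα
      (fun ℓ => hMC S hS jvec ℓ) hMA k
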